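/- For any table φ_1, …, φ_n, the Prox-Finito Lyapunov value decreases in expectation over the uniformly random index: (1/n)∑_{j=1}^n [f(w*) − B^(j)(w^(j))] ≤ (1 − μ/(μn + L − μ)) [f(w*) − B(w)], where B^(j) and w^(j) are the lower bound and its minimizer after the Prox-Finito update with index j. -/

import Mathlib

open scoped RealInnerProductSpace

/-- The strong-convexity lower bound `l_i` attached to table entry `φ i`. -/
noncomputable def pfL (d n : ℕ) (μ : ℝ)
    (f : Fin n → EuclideanSpace ℝ (Fin d) → ℝ)
    (f' : Fin n → EuclideanSpace ℝ (Fin d) → EuclideanSpace ℝ (Fin d))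
    (φ : Fin n → EuclideanSpace ℝ (Fin d)) (i : Fin n)
    (x : EuclideanSpace ℝ (Fin d)) : ℝ :=
  f i (φ i) + ⟪f' i (φ i), x - φ i⟫ + μ / 2 * ‖x - φ i‖ ^ 2

/-- The global lower bound `B` associated with a table `φ`. -/
noncomputable def pfB (d n : ℕ) (μ : ℝ)
    (f : Fin n → EuclideanSpace ℝ (Fin d) → ℝ)
    (f' : Fin n → EuclideanSpace ℝ (Fin d) → EuclideanSpace ℝ (Fin d))
    (φ : Fin n → EuclideanSpace ℝ (Fin d))
    (x : EuclideanSpace ℝ (Fin d)) : ℝ :=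
  (1 / (n : ℝ)) * ∑ i, pfL d n μ f f' φ i x

/-- The minimizer of the global lower bound `B` associated with a table `φ`. -/
noncomputable def pfW (d n : ℕ) (μ : ℝ)
    (f' : Fin n → EuclideanSpace ℝ (Fin d) → EuclideanSpace ℝ (Fin d))
    (φ : Fin n → EuclideanSpace ℝ (Fin d)) : EuclideanSpace ℝ (Fin d) :=
  (1 / (n : ℝ)) • ∑ i, φ i - (1 / (μ * n)) • ∑ i, f' i (φ i)

local notation "E" d => EuclideanSpace ℝ (Fin d)

lemma descent {d : ℕ} (f : (E d) → ℝ) (f' : (E d) → (E d)) (L : ℝ) (hL : 0 ≤ L)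
    (hgrad : ∀ x, HasGradientAt f (f' x) x)
    (hsmooth : ∀ x y, ‖f' x - f' y‖ ≤ L * ‖x - y‖) (x y : E d) :
    f x ≤ f y + ⟪f' y, x - y⟫ + L / 2 * ‖x - y‖ ^ 2 := by
  set v := x - y with hv
  have hlip : LipschitzWith (Real.toNNReal L) f' :=
    LipschitzWith.of_dist_le_mul fun a b => by
      simpa [dist_eq_norm, Real.coe_toNNReal L hL] using hsmooth a b
  have hder : ∀ t : ℝ, HasDerivAt (fun t : ℝ => f (y + t • v)) ⟪f' (y + t • v), v⟫ t := by
    intro t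
    have h1 : HasDerivAt (fun t : ℝ => y + t • v) v t := by
      simpa using ((hasDerivAt_id t).smul_const v).const_add y
    have h2 := (hgrad (y + t • v)).hasFDerivAt.comp_hasDerivAt t h1
    simpa [InnerProductSpace.toDual_apply_apply, Function.comp_def] using h2
  have hcont : Continuous fun t : ℝ => ⟪f' (y + t • v), v⟫ := by
    apply Continuous.inner _ continuous_const
    exact hlip.continuous.comp (by continuity)
  have hFTC : ∫ t in (0:ℝ)..1, ⟪f' (y + t • v), v⟫ = f (y + v) - f y := by
    have := intervalIntegral.integral_eq_sub_of_hasDerivAt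
      (f := fun t : ℝ => f (y + t • v)) (f' := fun t : ℝ => ⟪f' (y + t • v), v⟫)
      (a := 0) (b := 1) (fun t _ => hder t) (hcont.intervalIntegrable 0 1)
    simpa using this
  have hmono : ∫ t in (0:ℝ)..1, ⟪f' (y + t • v), v⟫
      ≤ ∫ t in (0:ℝ)..1, (⟪f' y, v⟫ + L * t * ‖v‖ ^ 2) := by
    apply intervalIntegral.integral_mono_on (by norm_num) (hcont.intervalIntegrable 0 1)
      ((by continuity : Continuous fun t : ℝ => ⟪f' y, v⟫ + L * t * ‖v‖ ^ 2).intervalIntegrable 0 1)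
    intro t ht
    have h1 : ⟪f' (y + t • v) - f' y, v⟫ ≤ ‖f' (y + t • v) - f' y‖ * ‖v‖ :=
      real_inner_le_norm _ _
    have h2 : ‖f' (y + t • v) - f' y‖ ≤ L * (t * ‖v‖) := by
      have := hsmooth (y + t • v) y
      simpa [norm_smul, abs_of_nonneg ht.1, mul_assoc] using this
    have h3 : ⟪f' (y + t • v) - f' y, v⟫ ≤ L * t * ‖v‖ ^ 2 := by
      calc ⟪f' (y + t • v) - f' y, v⟫ ≤ ‖f' (y + t • v) - f' y‖ * ‖v‖ := h1
        _ ≤ L * (t * ‖v‖) * ‖v‖ := by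
            apply mul_le_mul_of_nonneg_right h2 (norm_nonneg _)
        _ = L * t * ‖v‖ ^ 2 := by ring
    have := inner_sub_left (𝕜 := ℝ) (f' (y + t • v)) (f' y) v
    linarith [this ▸ h3]
  have hInt : ∫ t in (0:ℝ)..1, (⟪f' y, v⟫ + L * t * ‖v‖ ^ 2)
      = ⟪f' y, v⟫ + L / 2 * ‖v‖ ^ 2 := by
    have he : (fun t : ℝ => ⟪f' y, v⟫ + L * t * ‖v‖ ^ 2)
        = fun t : ℝ => ⟪f' y, v⟫ + (L * ‖v‖ ^ 2) * t := by
      funext t; ring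
    rw [he, intervalIntegral.integral_add intervalIntegrable_const
      ((by fun_prop : Continuous fun t : ℝ => L * ‖v‖ ^ 2 * t).intervalIntegrable 0 1),
      intervalIntegral.integral_const_mul, integral_id]
    simp; ring
  have hx : y + v = x := by simp [hv]
  rw [hx] at hFTC
  linarith [hFTC ▸ hmono, hInt ▸ hmono]

lemma coco {d : ℕ} (f : (E d) → ℝ) (f' : (E d) → (E d)) (μ L : ℝ) (hμ : 0 < μ)
    (hμL : μ < L)
    (hgrad : ∀ x, HasGradientAt f (f' x) x)
    (hsmooth : ∀ x y, ‖f' x - f' y‖ ≤ L * ‖x - y‖)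
    (hsc : ∀ x y, f x ≥ f y + ⟪f' y, x - y⟫ + μ / 2 * ‖x - y‖ ^ 2) (x y : E d) :
    f y + ⟪f' y, x - y⟫ + μ / 2 * ‖x - y‖ ^ 2
      + (1 / (2 * (L - μ))) * ‖f' x - f' y - μ • (x - y)‖ ^ 2 ≤ f x := by
  set c : ℝ := (L - μ)⁻¹ with hc
  have hcpos : 0 < c := inv_pos.mpr (by linarith)
  have hc1 : c * (L - μ) = 1 := inv_mul_cancel₀ (by linarith)
  set h : E d := f' x - f' y - μ • (x - y) with hh
  set z : (E d) := x - c • h with hzdef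
  have H1 := hsc z y
  have H2 := descent f f' L (by linarith) hgrad hsmooth z x
  -- scalar abbreviations
  have hzy : z - y = (x - y) - c • h := by rw [hzdef]; abel
  have hzx : z - x = -(c • h) := by rw [hzdef]; abel
  have e1 : ⟪f' y, z - y⟫ = ⟪f' y, x - y⟫ - c * ⟪f' y, h⟫ := by
    rw [hzy, inner_sub_right, real_inner_smul_right]
  have e2 : ‖z - y‖ ^ 2 = ‖x - y‖ ^ 2 - 2 * (c * ⟪x - y, h⟫) + c ^ 2 * ‖h‖ ^ 2 := by
    rw [hzy, norm_sub_sq_real, real_inner_smul_right, norm_smul]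
    rw [Real.norm_eq_abs, abs_of_pos hcpos]; ring
  have e3 : ⟪f' x, z - x⟫ = -(c * ⟪f' x, h⟫) := by
    rw [hzx, inner_neg_right, real_inner_smul_right]
  have e4 : ‖z - x‖ ^ 2 = c ^ 2 * ‖h‖ ^ 2 := by
    rw [hzx, norm_neg, norm_smul, Real.norm_eq_abs, abs_of_pos hcpos]; ring
  have e5 : ⟪f' x, h⟫ - ⟪f' y, h⟫ = ‖h‖ ^ 2 + μ * ⟪x - y, h⟫ := by
    have : f' x - f' y = h + μ • (x - y) := by rw [hh]; abel
    have h2 : ⟪f' x - f' y, h⟫ = ⟪h + μ • (x - y), h⟫ := by rw [this]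
    rw [inner_sub_left, inner_add_left, real_inner_smul_left,
      real_inner_self_eq_norm_sq] at h2
    linarith [h2, real_inner_comm (x - y) h]
  rw [e1, e2] at H1
  rw [e3, e4] at H2
  -- goal in scalars
  have key : c * (⟪f' x, h⟫ - ⟪f' y, h⟫) - μ * (c * ⟪x - y, h⟫)
      + μ / 2 * (c ^ 2 * ‖h‖ ^ 2) - L / 2 * (c ^ 2 * ‖h‖ ^ 2)
      = c / 2 * ‖h‖ ^ 2 := by
    rw [e5]
    have : c ^ 2 * (L - μ) = c := by
      have : c ^ 2 * (L - μ) = c * (c * (L - μ)) := by ring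
      rw [this, hc1, mul_one]
    nlinarith [this]
  have hfin : (1 / (2 * (L - μ))) * ‖h‖ ^ 2 = c / 2 * ‖h‖ ^ 2 := by
    rw [hc]; field_simp
  rw [hfin]
  linarith [H1, H2, key]

lemma grad_eq_zero {d : ℕ} (F : (E d) → ℝ) (Φ : (E d) → (E d)) (zz : E d) (K : ℝ)
    (hK : 0 ≤ K)
    (hlow : ∀ y x, F y + ⟪Φ y, x - y⟫ ≤ F x)
    (hlip : ∀ x y, ‖Φ x - Φ y‖ ≤ K * ‖x - y‖)
    (hmin : ∀ y, F zz ≤ F y) : Φ zz = 0 := by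
  set t : ℝ := 1 / (2 * (K + 1)) with ht
  have htpos : 0 < t := by positivity
  set y : (E d) := zz - t • Φ zz with hy
  have h1 : F y + ⟪Φ y, zz - y⟫ ≤ F zz := hlow y zz
  have h2 : F zz ≤ F y := hmin y
  have h3 : ⟪Φ y, zz - y⟫ ≤ 0 := by linarith
  have hzy : zz - y = t • Φ zz := by rw [hy]; abel
  have h4 : t * ⟪Φ y, Φ zz⟫ ≤ 0 := by
    rw [hzy, real_inner_smul_right] at h3; exact h3
  have h5 : ⟪Φ y, Φ zz⟫ ≤ 0 := by nlinarith [h4, htpos]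
  have h6 : ‖Φ zz‖ ^ 2 ≤ K * t * ‖Φ zz‖ ^ 2 := by
    have hA : ⟪Φ zz - Φ y, Φ zz⟫ ≤ ‖Φ zz - Φ y‖ * ‖Φ zz‖ := real_inner_le_norm _ _
    have hB : ‖Φ zz - Φ y‖ ≤ K * (t * ‖Φ zz‖) := by
      have := hlip zz y
      have hn : ‖zz - y‖ = t * ‖Φ zz‖ := by
        rw [hzy, norm_smul, Real.norm_eq_abs, abs_of_pos htpos]
      rw [hn] at this; exact this
    have hC : ⟪Φ zz - Φ y, Φ zz⟫ ≤ K * t * ‖Φ zz‖ ^ 2 := by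
      calc ⟪Φ zz - Φ y, Φ zz⟫ ≤ ‖Φ zz - Φ y‖ * ‖Φ zz‖ := hA
        _ ≤ K * (t * ‖Φ zz‖) * ‖Φ zz‖ :=
            mul_le_mul_of_nonneg_right hB (norm_nonneg _)
        _ = K * t * ‖Φ zz‖ ^ 2 := by ring
    have hD := inner_sub_left (𝕜 := ℝ) (Φ zz) (Φ y) (Φ zz)
    have hE := real_inner_self_eq_norm_sq (Φ zz)
    linarith [hC, h5, hD ▸ hC]
  have h7 : K * t ≤ 1 / 2 := by
    rw [ht, mul_one_div, div_le_div_iff₀ (by positivity) (by norm_num)]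
    nlinarith
  have h8 : ‖Φ zz‖ ^ 2 ≤ 0 := by nlinarith [h6, h7, sq_nonneg ‖Φ zz‖]
  have : ‖Φ zz‖ = 0 := by nlinarith [norm_nonneg (Φ zz), sq_nonneg ‖Φ zz‖]
  exact norm_eq_zero.mp this

lemma convex_sq_bound {d : ℕ} (a b : E d) (s : ℝ) (h0 : 0 ≤ s) (h1 : s ≤ 1) :
    s * (1 - s) * ‖a - b‖ ^ 2 ≤ (1 - s) * ‖a‖ ^ 2 + s * ‖b‖ ^ 2 := by
  have h2 := norm_sub_sq_real a b
  have h3 := sq_nonneg ‖(1 - s) • a + s • b‖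
  have h4 := norm_add_sq_real ((1 - s) • a) (s • b)
  have h5 : ‖(1 - s) • a‖ ^ 2 = (1 - s) ^ 2 * ‖a‖ ^ 2 := by
    rw [norm_smul, Real.norm_eq_abs, abs_of_nonneg (by linarith)]; ring
  have h6 : ‖s • b‖ ^ 2 = s ^ 2 * ‖b‖ ^ 2 := by
    rw [norm_smul, Real.norm_eq_abs, abs_of_nonneg h0]; ring
  have h7 : ⟪(1 - s) • a, s • b⟫ = (1 - s) * s * ⟪a, b⟫ := by
    rw [real_inner_smul_left, real_inner_smul_right]; ring
  nlinarith [h3, h4, h5, h6, h7, h2]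

lemma key {d : ℕ} (f : (E d) → ℝ) (f' : (E d) → (E d)) (μ L : ℝ) (n : ℕ)
    (hn : 1 ≤ n) (hμ : 0 < μ) (hμL : μ ≤ L)
    (hgrad : ∀ x, HasGradientAt f (f' x) x)
    (hsmooth : ∀ x y, ‖f' x - f' y‖ ≤ L * ‖x - y‖)
    (hsc : ∀ x y, f x ≥ f y + ⟪f' y, x - y⟫ + μ / 2 * ‖x - y‖ ^ 2)
    (s : ℝ) (hs : s = μ * n / (μ * n + L - μ)) (p q x : E d) :
    (1 - s) * (f p + ⟪f' p, x - p⟫ + μ / 2 * ‖x - p‖ ^ 2)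
      + s * (f q + ⟪f' q, x - q⟫ + μ / 2 * ‖x - q‖ ^ 2)
      + s ^ 2 / (2 * μ * n) * ‖f' q - f' p - μ • (q - p)‖ ^ 2 ≤ f x := by
  have hnpos : (0 : ℝ) < n := by exact_mod_cast Nat.pos_of_ne_zero (by omega)
  have hDpos : 0 < μ * n + L - μ := by nlinarith
  rcases eq_or_lt_of_le hμL with heq | hlt
  · -- L = μ : s = 1 and h = 0
    have hs1 : s = 1 := by rw [hs, ← heq]; field_simp; rw [add_sub_cancel_right, div_self (ne_of_gt hnpos)]
    have hzero : ‖f' q - f' p - μ • (q - p)‖ ^ 2 = 0 := by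
      have h1 := hsc q p
      have h2 := hsc p q
      have hmono : μ * ‖q - p‖ ^ 2 ≤ ⟪f' q - f' p, q - p⟫ := by
        have e0 : ⟪f' q - f' p, q - p⟫ = ⟪f' q, q - p⟫ - ⟪f' p, q - p⟫ :=
          inner_sub_left _ _ _
        have e1 : ⟪f' q, p - q⟫ = -⟪f' q, q - p⟫ := by
          rw [show p - q = -(q - p) by abel, inner_neg_right]
        have e2 : ‖p - q‖ ^ 2 = ‖q - p‖ ^ 2 := by
          rw [show p - q = -(q - p) by abel, norm_neg]
        rw [e0]
        rw [e1, e2] at h2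
        linarith [h1, h2]
      have hnrm : ‖f' q - f' p‖ ≤ μ * ‖q - p‖ := by rw [heq]; exact hsmooth q p
      have hexp : ‖f' q - f' p - μ • (q - p)‖ ^ 2
          = ‖f' q - f' p‖ ^ 2 - 2 * (μ * ⟪f' q - f' p, q - p⟫) + μ ^ 2 * ‖q - p‖ ^ 2 := by
        rw [norm_sub_sq_real, real_inner_smul_right, norm_smul, Real.norm_eq_abs,
          abs_of_pos hμ]
        ring
      nlinarith [hexp, hnrm, hmono, sq_nonneg ‖f' q - f' p - μ • (q - p)‖,
        norm_nonneg (f' q - f' p), norm_nonneg (q - p),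
        mul_self_nonneg (‖f' q - f' p‖ - μ * ‖q - p‖),
        mul_le_mul_of_nonneg_right hnrm (norm_nonneg (q - p))]
    rw [hs1, hzero]
    have := hsc x q
    simp only [sub_self, one_mul, zero_mul]
    linarith [this]
  · -- μ < L
    have hA := coco f f' μ L hμ hlt hgrad hsmooth hsc x p
    have hB := coco f f' μ L hμ hlt hgrad hsmooth hsc x q
    have hs01 : 0 < s ∧ s < 1 := by
      constructor
      · rw [hs]; positivity
      · rw [hs, div_lt_one hDpos]; nlinarith
    have hab : (f' x - f' p - μ • (x - p)) - (f' x - f' q - μ • (x - q))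
        = f' q - f' p - μ • (q - p) := by module
    have hsq := convex_sq_bound (f' x - f' p - μ • (x - p))
      (f' x - f' q - μ • (x - q)) s (le_of_lt hs01.1) (le_of_lt hs01.2)
    rw [hab] at hsq
    have hD0 : (μ * (n:ℝ) + L - μ) ≠ 0 := ne_of_gt hDpos
    have hL0 : L - μ ≠ 0 := ne_of_gt (by linarith)
    have hcoeff : s * (1 - s) * (1 / (2 * (L - μ))) = s ^ 2 / (2 * μ * n) := by
      rw [hs]
      field_simp
      ring
    have hc2 : (0:ℝ) ≤ 1 / (2 * (L - μ)) := le_of_lt (one_div_pos.mpr (by linarith))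
    set c : ℝ := 1 / (2 * (L - μ)) with hcdef
    set P : ℝ := f p + ⟪f' p, x - p⟫ + μ / 2 * ‖x - p‖ ^ 2 with hPdef
    set Q : ℝ := f q + ⟪f' q, x - q⟫ + μ / 2 * ‖x - q‖ ^ 2 with hQdef
    set A : ℝ := ‖f' x - f' p - μ • (x - p)‖ ^ 2 with hAdef
    set Bq : ℝ := ‖f' x - f' q - μ • (x - q)‖ ^ 2 with hBdef
    set H : ℝ := ‖f' q - f' p - μ • (q - p)‖ ^ 2 with hHdef
    clear_value c P Q A Bq H
    have w1 := mul_le_mul_of_nonneg_left hA (by linarith [hs01.2] : (0:ℝ) ≤ 1 - s)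
    have w2 := mul_le_mul_of_nonneg_left hB (le_of_lt hs01.1)
    have w3 := mul_le_mul_of_nonneg_left hsq hc2
    have e : s ^ 2 / (2 * μ * n) * H = c * (s * (1 - s) * H) := by
      rw [← hcoeff]; ring
    rw [e]
    ring_nf at w1 w2 w3 ⊢
    linarith [w1, w2, w3]

lemma pfL_expand (d n : ℕ) (μ : ℝ) (f : Fin n → (E d) → ℝ)
    (f' : Fin n → (E d) → (E d)) (φ : Fin n → (E d)) (i : Fin n) (x y : E d) :
    pfL d n μ f f' φ i x = pfL d n μ f f' φ i y
      + ⟪f' i (φ i) + μ • (y - φ i), x - y⟫ + μ / 2 * ‖x - y‖ ^ 2 := by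
  have h1 : x - φ i = (x - y) + (y - φ i) := by abel
  rw [pfL, pfL, h1, inner_add_right, norm_add_sq_real, inner_add_left,
    real_inner_smul_left, real_inner_comm (x - y) (y - φ i)]
  ring

lemma pfW_crit (d n : ℕ) (μ : ℝ) (hn : 1 ≤ n) (hμ : 0 < μ)
    (f' : Fin n → (E d) → (E d)) (φ : Fin n → (E d)) :
    ∑ i, (f' i (φ i) + μ • (pfW d n μ f' φ - φ i)) = 0 := by
  have hn0 : ((n : ℝ)) ≠ 0 := by
    have : (0:ℝ) < n := by exact_mod_cast Nat.pos_of_ne_zero (by omega)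
    exact ne_of_gt this
  have hμ0 : μ ≠ 0 := ne_of_gt hμ
  have hcard : (Finset.univ : Finset (Fin n)).card = n := by simp
  rw [Finset.sum_add_distrib]
  have h2 : ∑ i : Fin n, μ • (pfW d n μ f' φ - φ i)
      = (n : ℝ) • (μ • pfW d n μ f' φ) - μ • ∑ i, φ i := by
    simp only [smul_sub, Finset.sum_sub_distrib, Finset.sum_const, hcard,
      Finset.smul_sum]
    congr 1
    rw [← Nat.cast_smul_eq_nsmul ℝ]
  rw [h2, pfW]
  match_scalars <;> (field_simp; try ring)

lemma pfB_quad (d n : ℕ) (μ : ℝ) (hn : 1 ≤ n) (hμ : 0 < μ)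
    (f : Fin n → (E d) → ℝ) (f' : Fin n → (E d) → (E d)) (φ : Fin n → (E d))
    (y : E d) :
    pfB d n μ f f' φ y
      = pfB d n μ f f' φ (pfW d n μ f' φ) + μ / 2 * ‖y - pfW d n μ f' φ‖ ^ 2 := by
  have hn0 : ((n : ℝ)) ≠ 0 := by
    have : (0:ℝ) < n := by exact_mod_cast Nat.pos_of_ne_zero (by omega)
    exact ne_of_gt this
  set w := pfW d n μ f' φ with hw
  have h1 : ∀ i : Fin n, pfL d n μ f f' φ i y = pfL d n μ f f' φ i w
      + ⟪f' i (φ i) + μ • (w - φ i), y - w⟫ + μ / 2 * ‖y - w‖ ^ 2 :=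
    fun i => pfL_expand d n μ f f' φ i y w
  have h2 : ∑ i, pfL d n μ f f' φ i y
      = ∑ i, pfL d n μ f f' φ i w + (n : ℝ) * (μ / 2 * ‖y - w‖ ^ 2) := by
    rw [Finset.sum_congr rfl (fun i _ => h1 i), Finset.sum_add_distrib,
      Finset.sum_add_distrib, ← sum_inner, pfW_crit d n μ hn hμ f' φ,
      inner_zero_left]
    simp [Finset.card_univ, mul_comm]
  rw [pfB, pfB, h2]
  field_simp

lemma lin_diff {d : ℕ} (fq fp : ℝ) (gq gp : (E d)) (μ : ℝ) (p q y w : E d) :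
    (fq + ⟪gq, y - q⟫ + μ / 2 * ‖y - q‖ ^ 2) - (fp + ⟪gp, y - p⟫ + μ / 2 * ‖y - p‖ ^ 2)
      - ((fq + ⟪gq, w - q⟫ + μ / 2 * ‖w - q‖ ^ 2)
        - (fp + ⟪gp, w - p⟫ + μ / 2 * ‖w - p‖ ^ 2))
      = ⟪gq - gp - μ • (q - p), y - w⟫ := by
  have e1 : ⟪gq, y - q⟫ - ⟪gq, w - q⟫ = ⟪gq, y - w⟫ := by
    rw [← inner_sub_right]; congr 1; abel
  have e2 : ⟪gp, y - p⟫ - ⟪gp, w - p⟫ = ⟪gp, y - w⟫ := by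
    rw [← inner_sub_right]; congr 1; abel
  have e3 : ‖y - q‖ ^ 2 = ‖y - w‖ ^ 2 + 2 * ⟪y - w, w - q⟫ + ‖w - q‖ ^ 2 := by
    rw [show y - q = (y - w) + (w - q) by abel, norm_add_sq_real]
  have e4 : ‖y - p‖ ^ 2 = ‖y - w‖ ^ 2 + 2 * ⟪y - w, w - p⟫ + ‖w - p‖ ^ 2 := by
    rw [show y - p = (y - w) + (w - p) by abel, norm_add_sq_real]
  have r1 : ⟪gq - gp - μ • (q - p), y - w⟫
      = ⟪gq, y - w⟫ - ⟪gp, y - w⟫ - μ * ⟪q - p, y - w⟫ := by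
    rw [inner_sub_left, inner_sub_left, real_inner_smul_left]
  have c1 : ⟪y - w, w - q⟫ - ⟪y - w, w - p⟫ = -⟪q - p, y - w⟫ := by
    rw [← inner_sub_right, show w - q - (w - p) = -(q - p) by abel, inner_neg_right,
      real_inner_comm]
  linear_combination e1 - e2 + μ / 2 * e3 - μ / 2 * e4 - r1 + μ * c1

lemma psq {d : ℕ} (μ nn s : ℝ) (hμ : 0 < μ) (hn : 0 < nn) (u h : E d) :
    0 ≤ μ / 2 * ‖u‖ ^ 2 + s / nn * ⟪u, h⟫ + s ^ 2 / (2 * μ * nn ^ 2) * ‖h‖ ^ 2 := by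
  have e : μ / 2 * ‖u + (s / (μ * nn)) • h‖ ^ 2
      = μ / 2 * ‖u‖ ^ 2 + s / nn * ⟪u, h⟫ + s ^ 2 / (2 * μ * nn ^ 2) * ‖h‖ ^ 2 := by
    rw [norm_add_sq_real, real_inner_smul_right, norm_smul, mul_pow, Real.norm_eq_abs,
      sq_abs]
    field_simp
  rw [← e]
  positivity

-- gradient of average is zero at the minimizer
lemma star_crit (d n : ℕ) (hn : 1 ≤ n) (μ L : ℝ) (hμ : 0 < μ) (hμL : μ ≤ L)
    (f : Fin n → (E d) → ℝ) (f' : Fin n → (E d) → (E d))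
    (hsmooth : ∀ i x y, ‖f' i x - f' i y‖ ≤ L * ‖x - y‖)
    (hsc : ∀ i x y, f i x ≥ f i y + ⟪f' i y, x - y⟫ + μ / 2 * ‖x - y‖ ^ 2)
    (wstar : E d)
    (hstar : ∀ x, (1 / (n : ℝ)) * ∑ i, f i wstar ≤ (1 / (n : ℝ)) * ∑ i, f i x) :
    ∑ i, f' i wstar = 0 := by
  have hnpos : (0:ℝ) < n := by exact_mod_cast Nat.pos_of_ne_zero (by omega)
  apply grad_eq_zero (fun x => ∑ i, f i x) (fun x => ∑ i, f' i x) wstar ((n:ℝ) * L)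
    (by nlinarith)
  · intro y x
    have h1 : ∀ i : Fin n, f i y + ⟪f' i y, x - y⟫ ≤ f i x := by
      intro i
      have := hsc i x y
      nlinarith [sq_nonneg ‖x - y‖, this]
    calc (∑ i, f i y) + ⟪∑ i, f' i y, x - y⟫
        = ∑ i, (f i y + ⟪f' i y, x - y⟫) := by
          rw [Finset.sum_add_distrib, sum_inner]
      _ ≤ ∑ i, f i x := Finset.sum_le_sum fun i _ => h1 i
  · intro x y
    calc ‖(∑ i, f' i x) - ∑ i, f' i y‖ = ‖∑ i, (f' i x - f' i y)‖ := by
          rw [Finset.sum_sub_distrib]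
      _ ≤ ∑ i, ‖f' i x - f' i y‖ := norm_sum_le _ _
      _ ≤ ∑ _i : Fin n, L * ‖x - y‖ := Finset.sum_le_sum fun i _ => hsmooth i x y
      _ = (n:ℝ) * L * ‖x - y‖ := by
          rw [Finset.sum_const, Finset.card_univ, Fintype.card_fin, nsmul_eq_mul]; ring
  · intro y
    have h := hstar y
    have := mul_le_mul_of_nonneg_left h (le_of_lt hnpos)
    calc (∑ i, f i wstar) = (n:ℝ) * ((1 / (n : ℝ)) * ∑ i, f i wstar) := by
          field_simp
      _ ≤ (n:ℝ) * ((1 / (n : ℝ)) * ∑ i, f i y) := this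
      _ = ∑ i, f i y := by field_simp

lemma z_crit (d n : ℕ) (hn : 1 ≤ n) (μ L : ℝ) (hμ : 0 < μ) (hμL : μ ≤ L)
    (f : Fin n → (E d) → ℝ) (f' : Fin n → (E d) → (E d))
    (hsmooth : ∀ i x y, ‖f' i x - f' i y‖ ≤ L * ‖x - y‖)
    (hsc : ∀ i x y, f i x ≥ f i y + ⟪f' i y, x - y⟫ + μ / 2 * ‖x - y‖ ^ 2)
    (φ : Fin n → (E d)) (j : Fin n) (zj : E d)
    (hz : ∀ y, (1 / (n : ℝ)) * f j zj
          + (1 / (n : ℝ)) * ∑ i ∈ Finset.univ.erase j, pfL d n μ f f' φ i zj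
        ≤ (1 / (n : ℝ)) * f j y
          + (1 / (n : ℝ)) * ∑ i ∈ Finset.univ.erase j, pfL d n μ f f' φ i y) :
    f' j zj + ∑ i ∈ Finset.univ.erase j, (f' i (φ i) + μ • (zj - φ i)) = 0 := by
  have hnpos : (0:ℝ) < n := by exact_mod_cast Nat.pos_of_ne_zero (by omega)
  apply grad_eq_zero
    (fun y => f j y + ∑ i ∈ Finset.univ.erase j, pfL d n μ f f' φ i y)
    (fun y => f' j y + ∑ i ∈ Finset.univ.erase j, (f' i (φ i) + μ • (y - φ i))) zj
    (L + (n:ℝ) * μ) (by nlinarith)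
  · intro y x
    beta_reduce
    have h1 : f j y + ⟪f' j y, x - y⟫ ≤ f j x := by
      have := hsc j x y
      nlinarith [sq_nonneg ‖x - y‖]
    have h2 : ∀ i : Fin n, pfL d n μ f f' φ i y + ⟪f' i (φ i) + μ • (y - φ i), x - y⟫
        ≤ pfL d n μ f f' φ i x := by
      intro i
      have := pfL_expand d n μ f f' φ i x y
      nlinarith [sq_nonneg ‖x - y‖]
    have h3 : (∑ i ∈ Finset.univ.erase j, pfL d n μ f f' φ i y)
          + ⟪∑ i ∈ Finset.univ.erase j, (f' i (φ i) + μ • (y - φ i)), x - y⟫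
        ≤ ∑ i ∈ Finset.univ.erase j, pfL d n μ f f' φ i x := by
      rw [sum_inner, ← Finset.sum_add_distrib]
      exact Finset.sum_le_sum fun i _ => h2 i
    rw [inner_add_left]
    linarith
  · intro x y
    beta_reduce
    have hcd : (Finset.univ.erase j).card ≤ n := by
      calc (Finset.univ.erase j).card ≤ (Finset.univ : Finset (Fin n)).card :=
            Finset.card_le_card (Finset.erase_subset _ _)
        _ = n := by simp
    have e1 : (f' j x + ∑ i ∈ Finset.univ.erase j, (f' i (φ i) + μ • (x - φ i)))
        - (f' j y + ∑ i ∈ Finset.univ.erase j, (f' i (φ i) + μ • (y - φ i)))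
        = (f' j x - f' j y) + ((Finset.univ.erase j).card : ℝ) • (μ • (x - y)) := by
      have hpt : ∀ i ∈ Finset.univ.erase j,
          (f' i (φ i) + μ • (x - φ i)) - (f' i (φ i) + μ • (y - φ i)) = μ • (x - y) := by
        intro i _
        rw [show x - φ i = (x - y) + (y - φ i) by abel, smul_add]
        abel
      calc (f' j x + ∑ i ∈ Finset.univ.erase j, (f' i (φ i) + μ • (x - φ i)))
          - (f' j y + ∑ i ∈ Finset.univ.erase j, (f' i (φ i) + μ • (y - φ i)))
          = (f' j x - f' j y) + ∑ i ∈ Finset.univ.erase j,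
              ((f' i (φ i) + μ • (x - φ i)) - (f' i (φ i) + μ • (y - φ i))) := by
            rw [Finset.sum_sub_distrib]; abel
        _ = (f' j x - f' j y) + ((Finset.univ.erase j).card : ℝ) • (μ • (x - y)) := by
            rw [Finset.sum_congr rfl hpt, Finset.sum_const, ← Nat.cast_smul_eq_nsmul ℝ]
    rw [e1]
    calc ‖(f' j x - f' j y) + ((Finset.univ.erase j).card : ℝ) • (μ • (x - y))‖
        ≤ ‖f' j x - f' j y‖ + ‖((Finset.univ.erase j).card : ℝ) • (μ • (x - y))‖ :=
          norm_add_le _ _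
      _ ≤ L * ‖x - y‖ + ((Finset.univ.erase j).card : ℝ) * (μ * ‖x - y‖) := by
          rw [norm_smul, norm_smul, Real.norm_eq_abs, Real.norm_eq_abs,
            abs_of_nonneg (by positivity : (0:ℝ) ≤ ((Finset.univ.erase j).card : ℝ)),
            abs_of_pos hμ]
          exact add_le_add (hsmooth j x y) (le_refl _)
      _ ≤ L * ‖x - y‖ + (n : ℝ) * (μ * ‖x - y‖) := by
          have hcast : ((Finset.univ.erase j).card : ℝ) ≤ (n : ℝ) := by exact_mod_cast hcd
          exact add_le_add_right (mul_le_mul_of_nonneg_right hcast (by positivity)) _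
      _ = (L + (n:ℝ) * μ) * ‖x - y‖ := by ring
  · intro y
    have h := hz y
    have h2 := mul_le_mul_of_nonneg_left h (le_of_lt hnpos)
    have hne : (n:ℝ) ≠ 0 := ne_of_gt hnpos
    calc f j zj + ∑ i ∈ Finset.univ.erase j, pfL d n μ f f' φ i zj
        = (n:ℝ) * ((1 / (n : ℝ)) * f j zj
            + (1 / (n : ℝ)) * ∑ i ∈ Finset.univ.erase j, pfL d n μ f f' φ i zj) := by
          field_simp
      _ ≤ (n:ℝ) * ((1 / (n : ℝ)) * f j y
            + (1 / (n : ℝ)) * ∑ i ∈ Finset.univ.erase j, pfL d n μ f f' φ i y) := h2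
      _ = f j y + ∑ i ∈ Finset.univ.erase j, pfL d n μ f f' φ i y := by field_simp

lemma pfW_update (d n : ℕ) (hn : 1 ≤ n) (μ : ℝ) (hμ : 0 < μ)
    (f' : Fin n → (E d) → (E d)) (φ : Fin n → (E d)) (j : Fin n) (zj : E d)
    (hcrit : f' j zj + ∑ i ∈ Finset.univ.erase j, (f' i (φ i) + μ • (zj - φ i)) = 0) :
    pfW d n μ f' (Function.update φ j zj) = zj := by
  have hnpos : (0:ℝ) < n := by exact_mod_cast Nat.pos_of_ne_zero (by omega)
  have hn0 : ((n : ℝ)) ≠ 0 := ne_of_gt hnpos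
  have hμ0 : μ ≠ 0 := ne_of_gt hμ
  have hsφ : ∑ i, Function.update φ j zj i = zj + ∑ i ∈ Finset.univ.erase j, φ i := by
    rw [Finset.sum_update_of_mem (Finset.mem_univ j), Finset.erase_eq]
  have hsf : ∑ i, f' i (Function.update φ j zj i)
      = f' j zj + ∑ i ∈ Finset.univ.erase j, f' i (φ i) := by
    rw [← Finset.add_sum_erase _ (fun i => f' i (Function.update φ j zj i))
      (Finset.mem_univ j)]
    congr 1
    · simp
    · apply Finset.sum_congr rfl
      intro i hi
      rw [Function.update_of_ne (Finset.ne_of_mem_erase hi)]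
  have hcard : ((Finset.univ.erase j).card : ℝ) = (n : ℝ) - 1 := by
    rw [Finset.card_erase_of_mem (Finset.mem_univ j), Finset.card_univ, Fintype.card_fin]
    rw [Nat.cast_sub hn]
    norm_num
  have hsum2 : ∑ i ∈ Finset.univ.erase j, (f' i (φ i) + μ • (zj - φ i))
      = (∑ i ∈ Finset.univ.erase j, f' i (φ i))
        + (μ * ((n:ℝ) - 1)) • zj - μ • ∑ i ∈ Finset.univ.erase j, φ i := by
    rw [Finset.sum_add_distrib]
    have : ∑ i ∈ Finset.univ.erase j, μ • (zj - φ i)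
        = (μ * ((n:ℝ) - 1)) • zj - μ • ∑ i ∈ Finset.univ.erase j, φ i := by
      simp only [smul_sub, Finset.sum_sub_distrib, Finset.sum_const, Finset.smul_sum]
      rw [← Nat.cast_smul_eq_nsmul ℝ, hcard, smul_smul, mul_comm]
    rw [this]
    abel
  have hF : f' j zj + ∑ i ∈ Finset.univ.erase j, f' i (φ i)
      = μ • (∑ i ∈ Finset.univ.erase j, φ i) - (μ * ((n:ℝ) - 1)) • zj := by
    rw [hsum2] at hcrit
    have := hcrit
    rw [show f' j zj + ((∑ i ∈ Finset.univ.erase j, f' i (φ i))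
        + (μ * ((n:ℝ) - 1)) • zj - μ • ∑ i ∈ Finset.univ.erase j, φ i)
      = (f' j zj + ∑ i ∈ Finset.univ.erase j, f' i (φ i))
        + ((μ * ((n:ℝ) - 1)) • zj - μ • ∑ i ∈ Finset.univ.erase j, φ i) by abel] at this
    have h2 := eq_neg_of_add_eq_zero_left this
    rw [h2]
    abel
  rw [pfW, hsφ, hsf, hF]
  match_scalars <;> (field_simp; try ring)

lemma perj (d n : ℕ) (hn : 1 ≤ n) (μ L : ℝ) (hμ : 0 < μ) (hμL : μ ≤ L)
    (f : Fin n → (E d) → ℝ) (f' : Fin n → (E d) → (E d))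
    (hgrad : ∀ i x, HasGradientAt (f i) (f' i x) x)
    (hsmooth : ∀ i x y, ‖f' i x - f' i y‖ ≤ L * ‖x - y‖)
    (hsc : ∀ i x y, f i x ≥ f i y + ⟪f' i y, x - y⟫ + μ / 2 * ‖x - y‖ ^ 2)
    (wstar : E d) (φ : Fin n → (E d)) (j : Fin n) (zj : E d)
    (hzj : ∀ y, (1 / (n : ℝ)) * f j zj
          + (1 / (n : ℝ)) * ∑ i ∈ Finset.univ.erase j, pfL d n μ f f' φ i zj
        ≤ (1 / (n : ℝ)) * f j y
          + (1 / (n : ℝ)) * ∑ i ∈ Finset.univ.erase j, pfL d n μ f f' φ i y)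
    (s : ℝ) (hs : s = μ * n / (μ * n + L - μ)) :
    pfB d n μ f f' φ (pfW d n μ f' φ)
      + s / n * ((f j wstar + ⟪f' j wstar, pfW d n μ f' φ - wstar⟫
          + μ / 2 * ‖pfW d n μ f' φ - wstar‖ ^ 2)
        - pfL d n μ f f' φ j (pfW d n μ f' φ))
      ≤ pfB d n μ f f' (Function.update φ j zj)
          (pfW d n μ f' (Function.update φ j zj)) := by
  have hnpos : (0:ℝ) < n := by exact_mod_cast Nat.pos_of_ne_zero (by omega)
  have hcrit := z_crit d n hn μ L hμ hμL f f' hsmooth hsc φ j zj hzj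
  have hWup := pfW_update d n hn μ hμ f' φ j zj hcrit
  have hBup : pfB d n μ f f' (Function.update φ j zj) zj
      = (1 / (n:ℝ)) * (f j zj + ∑ i ∈ Finset.univ.erase j, pfL d n μ f f' φ i zj) := by
    rw [pfB, ← Finset.add_sum_erase _ _ (Finset.mem_univ j)]
    congr 2
    · rw [pfL]
      simp
    · apply Finset.sum_congr rfl
      intro i hi
      rw [pfL, pfL, Function.update_of_ne (Finset.ne_of_mem_erase hi)]
  set w : (E d) := pfW d n μ f' φ with hwdef
  have hkey := key (f j) (f' j) μ L n hn hμ hμL (hgrad j) (hsmooth j) (hsc j) s hs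
    (φ j) wstar zj
  have hsplit : pfB d n μ f f' φ zj
      = (1 / (n:ℝ)) * (pfL d n μ f f' φ j zj
          + ∑ i ∈ Finset.univ.erase j, pfL d n μ f f' φ i zj) := by
    rw [pfB, ← Finset.add_sum_erase _ _ (Finset.mem_univ j)]
  have hquad := pfB_quad d n μ hn hμ f f' φ zj
  have hld := lin_diff (f j wstar) (f j (φ j)) (f' j wstar) (f' j (φ j)) μ
    (φ j) wstar zj w
  have hps := psq μ (n:ℝ) s hμ hnpos (zj - w)
    (f' j wstar - f' j (φ j) - μ • (wstar - φ j))
  have hcomm : ⟪f' j wstar - f' j (φ j) - μ • (wstar - φ j), zj - w⟫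
      = ⟪zj - w, f' j wstar - f' j (φ j) - μ • (wstar - φ j)⟫ := real_inner_comm _ _
  rw [hcomm] at hld
  have hL1 : f j (φ j) + ⟪f' j (φ j), zj - φ j⟫ + μ / 2 * ‖zj - φ j‖ ^ 2
      = pfL d n μ f f' φ j zj := rfl
  have hL0 : f j (φ j) + ⟪f' j (φ j), w - φ j⟫ + μ / 2 * ‖w - φ j‖ ^ 2
      = pfL d n μ f f' φ j w := rfl
  rw [hL1] at hkey hld
  rw [hL0] at hld
  rw [hWup, hBup]
  have hk2 := mul_le_mul_of_nonneg_left hkey (by positivity : (0:ℝ) ≤ 1 / (n:ℝ))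
  -- abbreviate scalars
  set P1 : ℝ := pfL d n μ f f' φ j zj with hP1
  set P0 : ℝ := pfL d n μ f f' φ j w with hP0
  set Q1 : ℝ := f j wstar + ⟪f' j wstar, zj - wstar⟫ + μ / 2 * ‖zj - wstar‖ ^ 2 with hQ1
  set Q0 : ℝ := f j wstar + ⟪f' j wstar, w - wstar⟫ + μ / 2 * ‖w - wstar‖ ^ 2 with hQ0
  set Se : ℝ := ∑ i ∈ Finset.univ.erase j, pfL d n μ f f' φ i zj with hSe
  set Bw : ℝ := pfB d n μ f f' φ w with hBw
  set Bz : ℝ := pfB d n μ f f' φ zj with hBz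
  set Fz : ℝ := f j zj with hFz
  set NN : ℝ := ‖zj - w‖ ^ 2 with hNN
  set HH : ℝ := ‖f' j wstar - f' j (φ j) - μ • (wstar - φ j)‖ ^ 2 with hHH
  set II : ℝ := ⟪zj - w, f' j wstar - f' j (φ j) - μ • (wstar - φ j)⟫ with hII
  clear_value P1 P0 Q1 Q0 Se Bw Bz Fz NN HH II
  have hld2 : s / (n:ℝ) * (Q1 - P1 - (Q0 - P0)) = s / (n:ℝ) * II := by rw [hld]
  ring_nf at hk2 hsplit hquad hld2 hps ⊢
  linarith [hk2, hsplit, hquad, hld2, hps]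

theorem prox_finito_one_step (d n : ℕ) (hn : 1 ≤ n) (μ L : ℝ)
    (hμ : 0 < μ) (hμL : μ ≤ L)
    (f : Fin n → EuclideanSpace ℝ (Fin d) → ℝ)
    (f' : Fin n → EuclideanSpace ℝ (Fin d) → EuclideanSpace ℝ (Fin d))
    (hgrad : ∀ i x, HasGradientAt (f i) (f' i x) x)
    (hsmooth : ∀ i x y, ‖f' i x - f' i y‖ ≤ L * ‖x - y‖)
    (hsc : ∀ i x y, f i x ≥ f i y + ⟪f' i y, x - y⟫ + μ / 2 * ‖x - y‖ ^ 2)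
    (wstar : EuclideanSpace ℝ (Fin d))
    (hstar : ∀ x, (1 / (n : ℝ)) * ∑ i, f i wstar ≤ (1 / (n : ℝ)) * ∑ i, f i x)
    (φ : Fin n → EuclideanSpace ℝ (Fin d))
    (z : Fin n → EuclideanSpace ℝ (Fin d))
    (hz : ∀ j y,
      (1 / (n : ℝ)) * f j (z j)
          + (1 / (n : ℝ)) * ∑ i ∈ Finset.univ.erase j, pfL d n μ f f' φ i (z j)
        ≤ (1 / (n : ℝ)) * f j y
          + (1 / (n : ℝ)) * ∑ i ∈ Finset.univ.erase j, pfL d n μ f f' φ i y) :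
    (1 / (n : ℝ)) * ∑ j, ((1 / (n : ℝ)) * ∑ i, f i wstar
        - pfB d n μ f f' (Function.update φ j (z j))
            (pfW d n μ f' (Function.update φ j (z j))))
      ≤ (1 - μ / (μ * n + L - μ)) *
          ((1 / (n : ℝ)) * ∑ i, f i wstar - pfB d n μ f f' φ (pfW d n μ f' φ)) := by
  have hnpos : (0:ℝ) < n := by exact_mod_cast Nat.pos_of_ne_zero (by omega)
  have hn0 : ((n:ℝ)) ≠ 0 := ne_of_gt hnpos
  have hDpos : 0 < μ * (n:ℝ) + L - μ := by nlinarith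
  set s : ℝ := μ * (n:ℝ) / (μ * (n:ℝ) + L - μ) with hsdef
  have hs0 : 0 ≤ s := le_of_lt (by rw [hsdef]; positivity)
  set w : EuclideanSpace ℝ (Fin d) := pfW d n μ f' φ with hwdef
  set Bw : ℝ := pfB d n μ f f' φ w with hBwdef
  set Fs : ℝ := (1 / (n : ℝ)) * ∑ i, f i wstar with hFsdef
  have hsum0 := star_crit d n hn μ L hμ hμL f f' hsmooth hsc wstar hstar
  have hper : ∀ j : Fin n,
      Bw + s / n * ((f j wstar + ⟪f' j wstar, w - wstar⟫
            + μ / 2 * ‖w - wstar‖ ^ 2) - pfL d n μ f f' φ j w)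
        ≤ pfB d n μ f f' (Function.update φ j (z j))
            (pfW d n μ f' (Function.update φ j (z j))) :=
    fun j => perj d n hn μ L hμ hμL f f' hgrad hsmooth hsc wstar φ j (z j)
      (hz j) s hsdef
  -- sum of the per-index lower bounds
  have hstep : (1 / (n : ℝ)) * ∑ j, (Fs
      - pfB d n μ f f' (Function.update φ j (z j))
          (pfW d n μ f' (Function.update φ j (z j))))
      ≤ (1 / (n : ℝ)) * ∑ j, (Fs - Bw
          - s / n * ((f j wstar + ⟪f' j wstar, w - wstar⟫
              + μ / 2 * ‖w - wstar‖ ^ 2) - pfL d n μ f f' φ j w)) := by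
    apply mul_le_mul_of_nonneg_left _ (by positivity : (0:ℝ) ≤ 1 / (n:ℝ))
    apply Finset.sum_le_sum
    intro j _
    have := hper j
    linarith
  refine le_trans hstep ?_
  -- compute the aggregated right-hand side
  have hsum1 : ∑ j, (f j wstar + ⟪f' j wstar, w - wstar⟫ + μ / 2 * ‖w - wstar‖ ^ 2)
      = (∑ j, f j wstar) + (n:ℝ) * (μ / 2 * ‖w - wstar‖ ^ 2) := by
    rw [Finset.sum_add_distrib, Finset.sum_add_distrib, ← sum_inner, hsum0,
      inner_zero_left]
    rw [Finset.sum_const, Finset.card_univ, Fintype.card_fin, nsmul_eq_mul]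
    ring
  have hsum2 : ∑ j, pfL d n μ f f' φ j w = (n:ℝ) * Bw := by
    rw [hBwdef, pfB]
    field_simp
  have hFs : ∑ j, f j wstar = (n:ℝ) * Fs := by rw [hFsdef]; field_simp
  have hc : ∑ j, (s / (n:ℝ) * ((f j wstar + ⟪f' j wstar, w - wstar⟫
          + μ / 2 * ‖w - wstar‖ ^ 2) - pfL d n μ f f' φ j w))
      = s / (n:ℝ) * ((n:ℝ) * Fs + (n:ℝ) * (μ / 2 * ‖w - wstar‖ ^ 2) - (n:ℝ) * Bw) := by
    rw [← Finset.mul_sum, Finset.sum_sub_distrib, hsum1, hsum2, hFs]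
  have hconst : ∑ _j : Fin n, (Fs - Bw) = (n:ℝ) * (Fs - Bw) := by
    rw [Finset.sum_const, Finset.card_univ, Fintype.card_fin, nsmul_eq_mul]
  have hagg : ∑ j, (Fs - Bw
        - s / n * ((f j wstar + ⟪f' j wstar, w - wstar⟫
            + μ / 2 * ‖w - wstar‖ ^ 2) - pfL d n μ f f' φ j w))
      = (n:ℝ) * (Fs - Bw) - s / (n:ℝ) * ((n:ℝ) * Fs
          + (n:ℝ) * (μ / 2 * ‖w - wstar‖ ^ 2) - (n:ℝ) * Bw) := by
    rw [Finset.sum_sub_distrib, hconst, hc]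
  rw [hagg]
  have hcoeff : s / (n:ℝ) = μ / (μ * n + L - μ) := by
    rw [hsdef]
    field_simp
  have hW0 : 0 ≤ μ / 2 * ‖w - wstar‖ ^ 2 := by positivity
  have lhs_eq : (1 / (n : ℝ)) * ((n:ℝ) * (Fs - Bw) - s / n * (((n:ℝ) * Fs
        + (n:ℝ) * (μ / 2 * ‖w - wstar‖ ^ 2)) - (n:ℝ) * Bw))
      = (Fs - Bw) - s / n * (Fs + μ / 2 * ‖w - wstar‖ ^ 2 - Bw) := by
    field_simp
  rw [lhs_eq, ← hcoeff]
  nlinarith [mul_nonneg (div_nonneg hs0 (le_of_lt hnpos)) hW0]
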